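/- Let Φ : M × ℝ → M be a continuous flow on a Hausdorff topological space M (i.e. Φ is continuous, Φ(x,0) = x, and Φ(Φ(x,s),t) = Φ(x,s+t)), and let μ : M → ℝ be a continuous function such that Φ(x, μ(x)) = x for every x ∈ M. Then: (i) for every x ∈ M the function t ↦ μ(Φ(x,t)) is locally constant on ℝ; (ii) if x is non-periodic, i.e. the map t ↦ Φ(x,t) is injective, then μ(x) = 0; (iii) if x is periodic with minimal period T > 0 (the map t ↦ Φ(x,t) is non-constant, Φ(x,T) = x, and no s with 0 < s < T satisfies Φ(x,s) = x), then μ(x) = n·T for some integer n. -/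

import Mathlib

open Set Cardinal

lemma countable_preconnected_subsingleton' {s : Set ℝ} (hc : s.Countable)
    (hp : IsPreconnected s) : s.Subsingleton := by
  intro u hu v hv
  by_contra hne
  rcases lt_or_gt_of_ne hne with h | h
  · have : #(Icc u v) ≤ Cardinal.aleph0 := (hc.mono (hp.ordConnected.out hu hv)).le_aleph0
    rw [Cardinal.mk_Icc_real h] at this
    exact absurd this (not_le.mpr Cardinal.aleph0_lt_continuum)
  · have : #(Icc v u) ≤ Cardinal.aleph0 := (hc.mono (hp.ordConnected.out hv hu)).le_aleph0
    rw [Cardinal.mk_Icc_real h] at this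
    exact absurd this (not_le.mpr Cardinal.aleph0_lt_continuum)

/-- For a continuous flow `Φ` on a Hausdorff space `M` and a continuous
`μ : M → ℝ` with `Φ (x, μ x) = x` for all `x`:
(i) `t ↦ μ (Φ (x, t))` is locally constant for every `x`;
(ii) if `t ↦ Φ (x, t)` is injective then `μ x = 0`;
(iii) if `x` is periodic with minimal period `T > 0`, then `μ x = n·T` for some `n : ℤ`. -/
theorem stmt1 {M : Type*} [TopologicalSpace M] [T2Space M]
    (Φ : M × ℝ → M) (hΦc : Continuous Φ)
    (hΦ0 : ∀ x, Φ (x, 0) = x)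
    (hΦadd : ∀ x s t, Φ (Φ (x, s), t) = Φ (x, s + t))
    (μ : M → ℝ) (hμ : Continuous μ)
    (hfix : ∀ x, Φ (x, μ x) = x) :
    (∀ x : M, IsLocallyConstant fun t : ℝ => μ (Φ (x, t)))
    ∧ (∀ x : M, Function.Injective (fun t : ℝ => Φ (x, t)) → μ x = 0)
    ∧ (∀ x : M, ∀ T : ℝ, 0 < T → (¬ ∀ t : ℝ, Φ (x, t) = x) → Φ (x, T) = x →
        (∀ s : ℝ, 0 < s → s < T → Φ (x, s) ≠ x) → ∃ n : ℤ, μ x = n * T) := by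
  have hperiod_add : ∀ (x : M) (s t : ℝ), Φ (x, s) = x → Φ (x, t) = x →
      Φ (x, s + t) = x := fun x s t hs ht => by rw [← hΦadd, hs, ht]
  have hperiod_neg : ∀ (x : M) (s : ℝ), Φ (x, s) = x → Φ (x, -s) = x := by
    intro x s hs
    calc Φ (x, -s) = Φ (Φ (x, s), -s) := by rw [hs]
    _ = Φ (x, s + -s) := hΦadd _ _ _
    _ = x := by rw [add_neg_cancel, hΦ0]
  have hfper : ∀ (x : M) (t : ℝ), Φ (x, μ (Φ (x, t))) = x := by
    intro x t
    have h1 : Φ (x, t + μ (Φ (x, t))) = Φ (x, t) := by rw [← hΦadd]; exact hfix _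
    calc Φ (x, μ (Φ (x, t))) = Φ (x, (t + μ (Φ (x, t))) + -t) := by ring_nf
    _ = Φ (Φ (x, t + μ (Φ (x, t))), -t) := (hΦadd _ _ _).symm
    _ = Φ (Φ (x, t), -t) := by rw [h1]
    _ = Φ (x, t + -t) := hΦadd _ _ _
    _ = x := by rw [add_neg_cancel, hΦ0]
  refine ⟨?_, ?_, ?_⟩
  · -- (i) local constancy
    intro x
    set P : AddSubgroup ℝ :=
      { carrier := {t : ℝ | Φ (x, t) = x}
        zero_mem' := hΦ0 x
        add_mem' := fun ha hb => hperiod_add _ _ _ ha hb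
        neg_mem' := fun ha => hperiod_neg _ _ ha } with hPdef
    have hcont : Continuous (fun t : ℝ => μ (Φ (x, t))) :=
      hμ.comp (hΦc.comp (Continuous.prodMk_right x))
    have hmem : ∀ t : ℝ, μ (Φ (x, t)) ∈ P := fun t => hfper x t
    have hconst : ∀ t : ℝ, μ (Φ (x, t)) = μ (Φ (x, 0)) := by
      rcases P.dense_or_cyclic with hd | ⟨a, ha⟩
      · -- dense closed subgroup = everything: every t is a period
        have hPc : IsClosed (P : Set ℝ) :=
          isClosed_eq (hΦc.comp (Continuous.prodMk_right x)) continuous_const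
        have hall : ∀ t : ℝ, Φ (x, t) = x := by
          intro t
          have : t ∈ closure (P : Set ℝ) := hd t
          rwa [hPc.closure_eq] at this
        intro t; rw [hall t, hall 0]
      · -- cyclic: image is countable, connected, hence a singleton
        intro t
        have hsub : ((fun t : ℝ => μ (Φ (x, t))) '' univ) ⊆
            Set.range (fun n : ℤ => n • a) := by
          rintro _ ⟨s, -, rfl⟩
          have : μ (Φ (x, s)) ∈ AddSubgroup.closure ({a} : Set ℝ) := ha ▸ hmem s
          rw [← AddSubgroup.zmultiples_eq_closure] at this
          exact this
        have hcnt : ((fun t : ℝ => μ (Φ (x, t))) '' univ).Countable :=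
          (Set.countable_range _).mono hsub
        have hpre : IsPreconnected ((fun t : ℝ => μ (Φ (x, t))) '' univ) :=
          isPreconnected_univ.image _ hcont.continuousOn
        exact countable_preconnected_subsingleton' hcnt hpre
          (mem_image_of_mem _ (mem_univ t)) (mem_image_of_mem _ (mem_univ 0))
    have : (fun t : ℝ => μ (Φ (x, t))) = fun _ => μ (Φ (x, 0)) := funext hconst
    rw [this]
    exact IsLocallyConstant.const _
  · -- (ii) injective case
    intro x hinj
    apply hinj
    show Φ (x, μ x) = Φ (x, 0)
    rw [hΦ0, hfix]
  · -- (iii) periodic case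
    intro x T hT _ hTper hmin
    have hper_int : ∀ n : ℤ, Φ (x, n * T) = x := by
      intro n
      induction n using Int.induction_on with
      | zero => simpa using hΦ0 x
      | succ n ih =>
        have h := hperiod_add x (n * T) T ih hTper
        have : ((n : ℤ) + 1 : ℤ) * T = (n : ℝ) * T + T := by push_cast; ring
        rw [this]
        exact_mod_cast h
      | pred n ih =>
        push_cast at ih
        have h := hperiod_add x (-(n : ℝ) * T) (-T) ih (hperiod_neg x T hTper)
        have : ((-(n : ℤ) - 1 : ℤ) : ℝ) * T = (-(n : ℝ)) * T + -T := by push_cast; ring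
        rw [this]
        exact_mod_cast h
    set n : ℤ := ⌊μ x / T⌋ with hn
    have hnle : (n : ℝ) * T ≤ μ x := by
      have := Int.floor_le (μ x / T)
      calc (n : ℝ) * T ≤ (μ x / T) * T := by nlinarith
      _ = μ x := by field_simp
    have hlt : μ x < (n : ℝ) * T + T := by
      have h1 := Int.lt_floor_add_one (μ x / T)
      have h2 := mul_lt_mul_of_pos_right h1 hT
      rw [div_mul_cancel₀ _ (ne_of_gt hT)] at h2
      linarith
    have hr : Φ (x, μ x - n * T) = x := by
      have := hperiod_add x (μ x) (-(n * T)) (hfix x) (hperiod_neg x (n * T) (hper_int n))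
      rwa [← sub_eq_add_neg] at this
    rcases eq_or_lt_of_le (sub_nonneg.mpr hnle) with heq | hpos
    · exact ⟨n, by linarith [heq.symm]⟩
    · exact absurd hr (hmin _ hpos (by linarith))
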